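/- Assume the characteristic of F is 2. Let g be a monic divisor of x^{2n} − 1 in K[x] of degree k with 0 ≤ k ≤ 2n − 1, let D ⊆ K^{2n} be the cyclic code corresponding to the ideal ⟨g⟩ of K[x]/⟨x^{2n} − 1⟩, let h(x) = (x^{2n} − 1)/g(x) and h*(x) = x^{2n−k} h(1/x) its reciprocal polynomial with coefficient vector V_{h*} ∈ K^{2n}, and let C = Ψ^{-1}(D) ⊆ F^n. Then the alternating dual C^{⊥_a} equals the K-linear span of the k vectors T^i(Ψ^{-1}(τ(V_{h*}))) for 0 ≤ i ≤ k − 1. -/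

import Mathlib

open Polynomial

/-- The map `Ψ : F^n → K^{2n}`,
`Ψ(α₀,…,α_{n−1}) = (Tr(βα₀),…,Tr(βα_{n−1}), Tr(β̄α₀),…,Tr(β̄α_{n−1}))`, where `β̄ = β^q`. -/
def Psi (q n : ℕ) {K F : Type*} [Field K] [Field F] (Tr : F → K) (β : F)
    (α : Fin n → F) : Fin (2 * n) → K :=
  fun i =>
    if h : (i : ℕ) < n then Tr (β * α ⟨(i : ℕ), h⟩)
    else Tr (β ^ q * α ⟨(i : ℕ) - n, by have := i.isLt; omega⟩)

/-- The conjucyclic shift `T : F^n → F^n`, `T(c₀,…,c_{n−1}) = (c̄_{n−1}, c₀,…,c_{n−2})`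
with `c̄ = c^q`. -/
def Tshift (q n : ℕ) {F : Type*} [Field F] (c : Fin n → F) : Fin n → F :=
  fun i =>
    if _h : (i : ℕ) = 0 then (c ⟨n - 1, by have := i.isLt; omega⟩) ^ q
    else c ⟨(i : ℕ) - 1, by have := i.isLt; omega⟩

/-- The map `τ : K^{2n} → K^{2n}`, `τ(v₀,…,v_{2n−1}) = (−v_n,…,−v_{2n−1}, v₀,…,v_{n−1})`. -/
def tau (n : ℕ) {K : Type*} [Field K] (v : Fin (2 * n) → K) : Fin (2 * n) → K :=
  fun i =>
    if h : (i : ℕ) < n then - v ⟨n + (i : ℕ), by omega⟩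
    else v ⟨(i : ℕ) - n, by have := i.isLt; omega⟩

/-- The alternating inner product on `F^n`:
`⟨u,v⟩_a = (β̄² − β²) Σ_{i=0}^{n−1} (u_i v̄_i − ū_i v_i)`, where `x̄ = x^q`. -/
def altInner (q n : ℕ) {F : Type*} [Field F] (β : F) (u v : Fin n → F) : F :=
  ((β ^ q) ^ 2 - β ^ 2) * ∑ i : Fin n, (u i * (v i) ^ q - (u i) ^ q * v i)

/-- The coefficient vector in `K^m` of a polynomial `g ∈ K[x]`. -/
def coeffVec (m : ℕ) {K : Type*} [Field K] (g : K[X]) : Fin m → K :=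
  fun i => g.coeff (i : ℕ)

/-- The cyclic code of length `m` corresponding to the ideal `⟨g⟩` of `K[x]/⟨x^m − 1⟩`. -/
def cyclicCodeOf (m : ℕ) {K : Type*} [Field K] (g : K[X]) : Set (Fin m → K) :=
  {v | Ideal.Quotient.mk (Ideal.span {(X : K[X]) ^ m - 1})
        (∑ i : Fin m, Polynomial.C (v i) * X ^ (i : ℕ)) ∈
      Ideal.span {Ideal.Quotient.mk (Ideal.span {(X : K[X]) ^ m - 1}) g}}

namespace Stmt16

variable {K : Type*} [Field K]

noncomputable def polyOf (N : ℕ) (v : Fin N → K) : K[X] := ∑ i : Fin N, Polynomial.C (v i) * X ^ (i:ℕ)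

lemma polyOf_coeff {N : ℕ} (v : Fin N → K) (j : Fin N) : (polyOf N v).coeff j = v j := by
  simp only [polyOf, finset_sum_coeff, coeff_C_mul, coeff_X_pow]
  rw [Finset.sum_eq_single j]
  · simp
  · intro b _ hb
    have : ¬ ((j:ℕ) = (b:ℕ)) := fun h => hb (Fin.ext h.symm)
    simp [this]
  · simp

lemma polyOf_coeff_ge {N : ℕ} (v : Fin N → K) (j : ℕ) (hj : N ≤ j) :
    (polyOf N v).coeff j = 0 := by
  simp only [polyOf, finset_sum_coeff, coeff_C_mul, coeff_X_pow]
  apply Finset.sum_eq_zero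
  intro b _
  have : ¬ (j = (b:ℕ)) := by have := b.isLt; omega
  simp [this]

lemma polyOf_natDegree_le {N : ℕ} (hN : 0 < N) (v : Fin N → K) :
    (polyOf N v).natDegree ≤ N - 1 := by
  rw [Polynomial.natDegree_le_iff_coeff_eq_zero]
  intro m hm
  exact polyOf_coeff_ge v m (by omega)

lemma polyOf_coeffVec {N : ℕ} (p : K[X]) (hp : p.natDegree < N) :
    polyOf N (coeffVec N p) = p := by
  ext j
  rcases lt_or_ge j N with hj | hj
  · have := polyOf_coeff (coeffVec N p) ⟨j, hj⟩
    simpa [coeffVec] using this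
  · rw [polyOf_coeff_ge _ _ hj, eq_comm]
    exact Polynomial.coeff_eq_zero_of_natDegree_lt (lt_of_lt_of_le hp hj)

lemma mem_cyclicCode_iff {N : ℕ} (g : K[X]) (hdvd : g ∣ X ^ N - 1) (v : Fin N → K) :
    v ∈ cyclicCodeOf N g ↔ g ∣ polyOf N v := by
  unfold cyclicCodeOf
  rw [Set.mem_setOf_eq]
  have hrw : (∑ i : Fin N, Polynomial.C (v i) * X ^ (i:ℕ)) = polyOf N v := rfl
  rw [hrw, Ideal.mem_span_singleton]
  constructor
  · rintro ⟨c, hc⟩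
    obtain ⟨a, rfl⟩ := Ideal.Quotient.mk_surjective c
    have h0 : Ideal.Quotient.mk (Ideal.span {(X : K[X]) ^ N - 1}) (polyOf N v - g * a) = 0 := by
      rw [map_sub, hc, map_mul]
      ring
    rw [Ideal.Quotient.eq_zero_iff_mem, Ideal.mem_span_singleton] at h0
    have : g ∣ polyOf N v - g * a := dvd_trans hdvd h0
    have := dvd_add this (Dvd.intro a rfl)
    simpa using this
  · rintro ⟨a, ha⟩
    exact ⟨Ideal.Quotient.mk _ a, by rw [ha, map_mul]⟩

section Cyclic

variable {K : Type*} [Field K]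

lemma XN_ne (N : ℕ) (hN : 0 < N) : ((X:K[X]) ^ N - 1) ≠ 0 := by
  have := Polynomial.X_pow_sub_C_ne_zero hN (1:K)
  simpa using this

lemma XN_natDegree (N : ℕ) : ((X:K[X]) ^ N - 1).natDegree = N := by
  have := Polynomial.natDegree_X_pow_sub_C (n := N) (r := (1:K))
  simpa using this

lemma gh_eq (N : ℕ) {g : K[X]} (hg : g.Monic) (hdvd : g ∣ X ^ N - 1) :
    g * (((X:K[X]) ^ N - 1) / g) = X ^ N - 1 :=
  EuclideanDomain.mul_div_cancel' hg.ne_zero hdvd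

lemma h_ne (N : ℕ) (hN : 0 < N) {g : K[X]} (hg : g.Monic) (hdvd : g ∣ X ^ N - 1) :
    (((X:K[X]) ^ N - 1) / g) ≠ 0 := by
  intro h0
  have := gh_eq N hg hdvd
  rw [h0, mul_zero] at this
  exact XN_ne N hN this.symm

lemma h_natDegree (N : ℕ) (hN : 0 < N) {g : K[X]} (hg : g.Monic) (hdvd : g ∣ X ^ N - 1) :
    (((X:K[X]) ^ N - 1) / g).natDegree = N - g.natDegree := by
  have h1 := gh_eq N hg hdvd
  have h2 : (g * (((X:K[X]) ^ N - 1) / g)).natDegree = N := by rw [h1, XN_natDegree]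
  rw [Polynomial.natDegree_mul hg.ne_zero (h_ne N hN hg hdvd)] at h2
  omega

lemma XN_coeff_zero (N : ℕ) (hN : 0 < N) : ((X:K[X]) ^ N - 1).coeff 0 = -1 := by
  simp [Polynomial.coeff_X_pow, hN.ne]

lemma g0_ne (N : ℕ) (hN : 0 < N) {g : K[X]} (hg : g.Monic) (hdvd : g ∣ X ^ N - 1) :
    g.coeff 0 ≠ 0 := by
  intro h0
  have := Polynomial.mul_coeff_zero g (((X:K[X]) ^ N - 1) / g)
  rw [gh_eq N hg hdvd, XN_coeff_zero N hN, h0, zero_mul] at this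
  exact one_ne_zero (neg_eq_zero.mp this)

lemma h0_ne (N : ℕ) (hN : 0 < N) {g : K[X]} (hg : g.Monic) (hdvd : g ∣ X ^ N - 1) :
    (((X:K[X]) ^ N - 1) / g).coeff 0 ≠ 0 := by
  intro h0
  have := Polynomial.mul_coeff_zero g (((X:K[X]) ^ N - 1) / g)
  rw [gh_eq N hg hdvd, XN_coeff_zero N hN, h0, mul_zero] at this
  exact one_ne_zero (neg_eq_zero.mp this)

lemma hrev_coeff_le (N : ℕ) (hN : 0 < N) {g : K[X]} (hg : g.Monic) (hdvd : g ∣ X ^ N - 1)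
    (m : ℕ) (hm : m ≤ N - g.natDegree) :
    (((X:K[X]) ^ N - 1) / g).reverse.coeff m =
      (((X:K[X]) ^ N - 1) / g).coeff (N - g.natDegree - m) := by
  rw [Polynomial.coeff_reverse, h_natDegree N hN hg hdvd, Polynomial.revAt_le hm]

lemma hrev_coeff_gt (N : ℕ) (hN : 0 < N) {g : K[X]} (hg : g.Monic) (hdvd : g ∣ X ^ N - 1)
    (m : ℕ) (hm : N - g.natDegree < m) :
    (((X:K[X]) ^ N - 1) / g).reverse.coeff m = 0 := by
  rw [Polynomial.coeff_reverse, h_natDegree N hN hg hdvd,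
    Polynomial.revAt_eq_self_of_lt hm]
  exact Polynomial.coeff_eq_zero_of_natDegree_lt (by rw [h_natDegree N hN hg hdvd]; omega)

/-- Lemma A: a codeword is orthogonal to every generator `X^i·h*`. -/
lemma dot_code_gen (N k : ℕ) (hN : 0 < N) {g : K[X]} (hg : g.Monic)
    (hdvd : g ∣ X ^ N - 1) (hdeg : g.natDegree = k) (hk : k ≤ N - 1)
    (v : Fin N → K) (hv : g ∣ polyOf N v) (i : ℕ) (hi : i < k) :
    ∑ j : Fin N, v j * coeffVec N ((X:K[X]) ^ i * (((X:K[X]) ^ N - 1) / g).reverse) j = 0 := by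
  set h : K[X] := ((X:K[X]) ^ N - 1) / g with hh
  set P : K[X] := polyOf N v with hP
  set M : ℕ := N - k + i with hM
  have hMN : M + 1 ≤ N := by omega
  -- rewrite the Fin-sum as a range-sum
  have e1 : ∑ j : Fin N, v j * coeffVec N ((X:K[X]) ^ i * h.reverse) j
      = ∑ j ∈ Finset.range N, P.coeff j * ((X:K[X]) ^ i * h.reverse).coeff j := by
    rw [← Fin.sum_univ_eq_sum_range (fun j => P.coeff j * ((X:K[X]) ^ i * h.reverse).coeff j) N]
    refine Finset.sum_congr rfl fun j _ => ?_
    rw [hP, polyOf_coeff]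
    rfl
  have e2 : ∀ j < N, P.coeff j * ((X:K[X]) ^ i * h.reverse).coeff j
      = if j ≤ M then P.coeff j * h.coeff (M - j) else 0 := by
    intro j hj
    rw [mul_comm ((X:K[X]) ^ i) h.reverse, Polynomial.coeff_mul_X_pow']
    rcases lt_or_ge j i with hji | hji
    · have h1 : ¬ (i ≤ j) := by omega
      have h2 : j ≤ M := by omega
      have h3 : h.coeff (M - j) = 0 := by
        apply Polynomial.coeff_eq_zero_of_natDegree_lt
        rw [hh, h_natDegree N hN hg hdvd, hdeg]
        omega
      simp [h1, h2, h3]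
    · rcases le_or_gt j M with hjM | hjM
      · have h1 : i ≤ j := hji
        have h2 : j - i ≤ N - k := by omega
        rw [if_pos h1, if_pos hjM,
          hrev_coeff_le N hN hg hdvd (j - i) (by rw [hdeg]; omega)]
        congr 2
        rw [hdeg]
        omega
      · rw [if_pos hji, if_neg (by omega),
          hrev_coeff_gt N hN hg hdvd (j - i) (by rw [hdeg]; omega), mul_zero]
  have e3 : ∑ j ∈ Finset.range N, P.coeff j * ((X:K[X]) ^ i * h.reverse).coeff j
      = ∑ j ∈ Finset.range (M + 1), P.coeff j * h.coeff (M - j) := by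
    rw [Finset.sum_congr rfl (fun j hj => e2 j (Finset.mem_range.mp hj))]
    rw [← Finset.sum_subset (Finset.range_subset_range.mpr hMN)
      (fun x _ hx => if_neg (by simp only [Finset.mem_range] at hx; omega))]
    exact Finset.sum_congr rfl fun j hj =>
      if_pos (by have := Finset.mem_range.mp hj; omega)
  have e4 : ∑ j ∈ Finset.range (M + 1), P.coeff j * h.coeff (M - j)
      = (P * h).coeff M := by
    rw [Polynomial.coeff_mul, Finset.Nat.sum_antidiagonal_eq_sum_range_succ_mk]
  obtain ⟨a, hPa⟩ := hv
  have hPh : P * h = ((X:K[X]) ^ N - 1) * a := by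
    rw [hPa, mul_right_comm, gh_eq N hg hdvd]
  have ha0 : a.coeff M = 0 := by
    rcases eq_or_ne a 0 with rfl | ha
    · simp
    · apply Polynomial.coeff_eq_zero_of_natDegree_lt
      have h1 : P.natDegree ≤ N - 1 := polyOf_natDegree_le (by omega) v
      rw [hPa, Polynomial.natDegree_mul hg.ne_zero ha, hdeg] at h1
      omega
  have e5 : (P * h).coeff M = 0 := by
    rw [hPh, sub_mul, one_mul, Polynomial.coeff_sub, mul_comm ((X:K[X])^N) a,
      Polynomial.coeff_mul_X_pow', if_neg (by omega), ha0, sub_zero]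
  rw [e1, e3, e4, e5]

end Cyclic

section Dual

variable {K : Type*} [Field K]

noncomputable def dotL (N : ℕ) (d : Fin N → K) : (Fin N → K) →ₗ[K] K where
  toFun w := ∑ j : Fin N, d j * w j
  map_add' u v := by simp [mul_add, Finset.sum_add_distrib]
  map_smul' c u := by simp [Finset.mul_sum, mul_left_comm, smul_eq_mul]

lemma single_smul'' {k : ℕ} (i : Fin k) (c a : K) :
    c • (Pi.single i a : Fin k → K) = Pi.single i (c * a) := by
  funext j
  rcases eq_or_ne j i with rfl | hji
  · simp
  · simp [Pi.single_apply, hji]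

lemma span_orth (N k : ℕ) (hN : 0 < N) {g : K[X]} (hg : g.Monic)
    (hdvd : g ∣ X ^ N - 1) (hdeg : g.natDegree = k) (hk : k ≤ N - 1)
    (m : Fin N → K)
    (hm : m ∈ Submodule.span K (Set.range fun i : Fin k =>
        coeffVec N ((X:K[X]) ^ (i:ℕ) * (((X:K[X]) ^ N - 1) / g).reverse)))
    (d : Fin N → K) (hd : g ∣ polyOf N d) :
    ∑ j : Fin N, d j * m j = 0 := by
  have hker : Submodule.span K (Set.range fun i : Fin k =>
      coeffVec N ((X:K[X]) ^ (i:ℕ) * (((X:K[X]) ^ N - 1) / g).reverse))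
      ≤ LinearMap.ker (dotL N d) := by
    rw [Submodule.span_le]
    rintro _ ⟨i, rfl⟩
    exact LinearMap.mem_ker.mpr (dot_code_gen N k hN hg hdvd hdeg hk d hd i i.isLt)
  exact LinearMap.mem_ker.mp (hker hm)

lemma zero_of_orth (N k : ℕ) (hN : 0 < N) {g : K[X]} (hg : g.Monic)
    (hdvd : g ∣ X ^ N - 1) (hdeg : g.natDegree = k) (hk : k ≤ N - 1)
    (w : Fin N → K)
    (hE : ∀ j : ℕ, j < N - k → ∑ l : Fin N, ((X:K[X]) ^ j * g).coeff (l:ℕ) * w l = 0)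
    (htop : ∀ t : Fin N, N - k ≤ (t:ℕ) → w t = 0) : w = 0 := by
  have key : ∀ s : ℕ, ∀ t : Fin N, N - (t:ℕ) ≤ s → w t = 0 := by
    intro s
    induction s with
    | zero => intro t ht; exact absurd ht (by have := t.isLt; omega)
    | succ s ih =>
      intro t ht
      rcases le_or_gt (N - k) (t:ℕ) with h1 | h1
      · exact htop t h1
      · have hj := hE (t:ℕ) (by omega)
        have hsingle : ∑ l : Fin N, ((X:K[X]) ^ (t:ℕ) * g).coeff (l:ℕ) * w l
            = ((X:K[X]) ^ (t:ℕ) * g).coeff (t:ℕ) * w t := by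
          apply Finset.sum_eq_single
          · intro l _ hlt
            have hlt' : (l:ℕ) ≠ (t:ℕ) := fun hh => hlt (Fin.ext hh)
            rcases lt_or_gt_of_ne hlt' with h2 | h2
            · rw [mul_comm ((X:K[X]) ^ (t:ℕ)) g, Polynomial.coeff_mul_X_pow',
                if_neg (by omega), zero_mul]
            · rw [ih l (by have := t.isLt; omega), mul_zero]
          · intro habs; exact absurd (Finset.mem_univ t) habs
        rw [hsingle, mul_comm ((X:K[X]) ^ (t:ℕ)) g, Polynomial.coeff_mul_X_pow',
          if_pos le_rfl, Nat.sub_self] at hj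
        exact (mul_eq_zero.mp hj).resolve_left (g0_ne N hN hg hdvd)
  funext t
  exact key N t (by omega)

lemma top_match (N k : ℕ) (hN : 0 < N) {g : K[X]} (hg : g.Monic)
    (hdvd : g ∣ X ^ N - 1) (hdeg : g.natDegree = k) (hk : k ≤ N - 1)
    (w : Fin N → K) :
    ∃ m ∈ Submodule.span K (Set.range fun i : Fin k =>
        coeffVec N ((X:K[X]) ^ (i:ℕ) * (((X:K[X]) ^ N - 1) / g).reverse)),
      ∀ t : Fin N, N - k ≤ (t:ℕ) → m t = w t := by
  set hrev : K[X] := (((X:K[X]) ^ N - 1) / g).reverse with hhrev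
  set sfun : Fin k → (Fin N → K) :=
    (fun i : Fin k => coeffVec N ((X:K[X]) ^ (i:ℕ) * hrev)) with hsfun
  set M := Submodule.span K (Set.range sfun) with hM
  have hf : ∀ i' : Fin k, N - k + (i':ℕ) < N := by
    intro i'; have := i'.isLt; omega
  set f : Fin k → Fin N := fun i' => ⟨N - k + (i':ℕ), hf i'⟩ with hfdef
  set π : (Fin N → K) →ₗ[K] (Fin k → K) := LinearMap.funLeft K K f with hπ
  have hval : ∀ (jn : ℕ) (i' : Fin k),
      π (coeffVec N ((X:K[X]) ^ jn * hrev)) i'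
        = ((X:K[X]) ^ jn * hrev).coeff (N - k + (i':ℕ)) := fun jn i' => rfl
  have hzero : ∀ (jn : ℕ) (i' : Fin k), jn < k → jn < (i':ℕ) →
      π (coeffVec N ((X:K[X]) ^ jn * hrev)) i' = 0 := by
    intro jn i' hjk hgt
    rw [hval, mul_comm, Polynomial.coeff_mul_X_pow', if_pos (by omega)]
    rw [hhrev, hrev_coeff_gt N hN hg hdvd _ (by rw [hdeg]; omega)]
  have hdiag : ∀ (jn : ℕ) (hjn : jn < k),
      π (coeffVec N ((X:K[X]) ^ jn * hrev)) ⟨jn, hjn⟩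
        = (((X:K[X]) ^ N - 1) / g).coeff 0 := by
    intro jn hjk
    have hv := hval jn ⟨jn, hjk⟩
    simp only [Fin.val_mk] at hv
    rw [hv, mul_comm, Polynomial.coeff_mul_X_pow', if_pos (by omega)]
    have heq2 : N - k + jn - jn = N - g.natDegree := by rw [hdeg]; omega
    rw [heq2, hhrev, hrev_coeff_le N hN hg hdvd _ le_rfl, Nat.sub_self]
  have hstd : ∀ jn : ℕ, ∀ hj : jn < k,
      (Pi.single (⟨jn, hj⟩ : Fin k) (1:K)) ∈ Submodule.map π M := by
    intro jn
    induction jn using Nat.strong_induction_on with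
    | _ jn ih =>
      intro hj
      set j : Fin k := ⟨jn, hj⟩ with hjdef
      set x : Fin k → K := π (sfun j) with hx
      have hxmem : x ∈ Submodule.map π M :=
        Submodule.mem_map_of_mem (Submodule.subset_span ⟨j, rfl⟩)
      have hsum : ∑ i' : Fin k, Pi.single i' (x i') = x := Finset.univ_sum_single x
      have hsingle_mem : Pi.single j (x j) ∈ Submodule.map π M := by
        have hxj : Pi.single j (x j) = x - ∑ i' ∈ Finset.univ.erase j, Pi.single i' (x i') := by
          refine eq_sub_of_add_eq ?_
          exact (Finset.add_sum_erase _ _ (Finset.mem_univ j)).trans hsum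
        rw [hxj]
        apply Submodule.sub_mem _ hxmem
        apply Submodule.sum_mem
        intro i' hi'
        have hne : i' ≠ j := Finset.ne_of_mem_erase hi'
        rcases lt_or_gt_of_ne (fun hh => hne (Fin.ext hh) : (i':ℕ) ≠ jn) with h2 | h2
        · have := ih (i':ℕ) h2 i'.isLt
          have heq : (⟨(i':ℕ), i'.isLt⟩ : Fin k) = i' := rfl
          rw [heq] at this
          have : (x i') • (Pi.single i' (1:K) : Fin k → K) ∈ Submodule.map π M :=
            Submodule.smul_mem _ _ this
          rwa [single_smul'', mul_one] at this
        · have : x i' = 0 := hzero jn i' hj h2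
          rw [this, Pi.single_zero]
          exact Submodule.zero_mem _
      have hxj_ne : x j ≠ 0 := by
        rw [hx, hsfun]
        rw [hjdef]
        rw [hdiag jn hj]
        exact h0_ne N hN hg hdvd
      have := Submodule.smul_mem _ (x j)⁻¹ hsingle_mem
      rwa [single_smul'', inv_mul_cancel₀ hxj_ne] at this
  have htop : Submodule.map π M = ⊤ := by
    rw [Submodule.eq_top_iff']
    intro y
    have hy : y = ∑ i : Fin k, Pi.single i (y i) := (Finset.univ_sum_single y).symm
    rw [hy]
    apply Submodule.sum_mem
    intro i _
    have := Submodule.smul_mem _ (y i) (hstd (i:ℕ) i.isLt)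
    rw [single_smul'', mul_one] at this
    have heq : (⟨(i:ℕ), i.isLt⟩ : Fin k) = i := rfl
    rwa [heq] at this
  obtain ⟨m, hm, hπm⟩ : ∃ m ∈ M, π m = π w := by
    have : π w ∈ Submodule.map π M := by rw [htop]; trivial
    obtain ⟨m, hm, hmeq⟩ := this
    exact ⟨m, hm, hmeq⟩
  refine ⟨m, hm, ?_⟩
  intro t hts
  have hik : (t:ℕ) - (N - k) < k := by have := t.isLt; omega
  set i' : Fin k := ⟨(t:ℕ) - (N - k), hik⟩ with hi'
  have hft : f i' = t := by
    apply Fin.ext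
    show N - k + ((t:ℕ) - (N - k)) = (t:ℕ)
    omega
  have h1 : π m i' = π w i' := by rw [hπm]
  simpa [hπ, LinearMap.funLeft_apply, hft] using h1

lemma dual_eq_span (N k : ℕ) (hN : 0 < N) {g : K[X]} (hg : g.Monic)
    (hdvd : g ∣ X ^ N - 1) (hdeg : g.natDegree = k) (hk : k ≤ N - 1)
    (w : Fin N → K) :
    (∀ d ∈ cyclicCodeOf N g, ∑ j : Fin N, d j * w j = 0) ↔
      w ∈ Submodule.span K (Set.range fun i : Fin k =>
        coeffVec N ((X:K[X]) ^ (i:ℕ) * (((X:K[X]) ^ N - 1) / g).reverse)) := by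
  constructor
  · intro H
    obtain ⟨m, hm, hmw⟩ := top_match N k hN hg hdvd hdeg hk w
    have hdmem : ∀ j : ℕ, j < N - k → coeffVec N ((X:K[X]) ^ j * g) ∈ cyclicCodeOf N g := by
      intro j hjk
      have hdX : ((X:K[X]) ^ j * g).natDegree < N := by
        have h3 := Polynomial.natDegree_mul_le (p := (X:K[X]) ^ j) (q := g)
        rw [Polynomial.natDegree_X_pow] at h3
        omega
      rw [mem_cyclicCode_iff g hdvd, polyOf_coeffVec _ hdX]
      exact dvd_mul_left g _
    have hEd : ∀ j : ℕ, j < N - k →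
        ∑ l : Fin N, ((X:K[X]) ^ j * g).coeff (l:ℕ) * (w - m) l = 0 := by
      intro j hjk
      have h1 := H _ (hdmem j hjk)
      have hdX : ((X:K[X]) ^ j * g).natDegree < N := by
        have h3 := Polynomial.natDegree_mul_le (p := (X:K[X]) ^ j) (q := g)
        rw [Polynomial.natDegree_X_pow] at h3
        omega
      have h2 := span_orth N k hN hg hdvd hdeg hk m hm
        (coeffVec N ((X:K[X]) ^ j * g))
        (by rw [polyOf_coeffVec _ hdX]; exact dvd_mul_left g _)
      have : ∑ l : Fin N, ((X:K[X]) ^ j * g).coeff (l:ℕ) * (w - m) l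
          = (∑ l : Fin N, ((X:K[X]) ^ j * g).coeff (l:ℕ) * w l)
            - ∑ l : Fin N, ((X:K[X]) ^ j * g).coeff (l:ℕ) * m l := by
        rw [← Finset.sum_sub_distrib]
        exact Finset.sum_congr rfl fun l _ => by simp [mul_sub]
      rw [this,
        show (∑ l : Fin N, ((X:K[X]) ^ j * g).coeff (l:ℕ) * w l) = 0 from h1,
        show (∑ l : Fin N, ((X:K[X]) ^ j * g).coeff (l:ℕ) * m l) = 0 from h2, sub_zero]
    have htopz : ∀ t : Fin N, N - k ≤ (t:ℕ) → (w - m) t = 0 := by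
      intro t ht
      simp [Pi.sub_apply, hmw t ht]
    have := zero_of_orth N k hN hg hdvd hdeg hk (w - m) hEd htopz
    have hwm : w = m := by
      have := sub_eq_zero.mp this
      exact this
    rw [hwm]; exact hm
  · intro hw d hd
    exact span_orth N k hN hg hdvd hdeg hk w hw d ((mem_cyclicCode_iff g hdvd d).mp hd)

end Dual

section FieldSide

variable {K F : Type*} [Field K] [Fintype K] [Field F] [Fintype F] [Algebra K F]

lemma not_forall_pow_q [DecidableEq F] (q : ℕ) (hq : 2 ≤ q) (hF : Fintype.card F = q ^ 2) :
    ¬ (∀ x : F, x ^ q = x) := by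
  intro hall
  set p : F[X] := X ^ q - X with hp
  have hdeg : p.natDegree = q := by
    rw [hp, Polynomial.natDegree_sub_eq_left_of_natDegree_lt]
    · exact Polynomial.natDegree_X_pow q
    · rw [Polynomial.natDegree_X_pow, Polynomial.natDegree_X]; omega
  have hp0 : p ≠ 0 := by
    intro h
    rw [h, Polynomial.natDegree_zero] at hdeg
    omega
  have hroots : ∀ x : F, x ∈ p.roots := by
    intro x
    rw [Polynomial.mem_roots hp0]
    simp [hp, Polynomial.IsRoot, hall x]
  have h1 : (Finset.univ : Finset F) ⊆ p.roots.toFinset :=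
    fun x _ => Multiset.mem_toFinset.mpr (hroots x)
  have h2 := Finset.card_le_card h1
  have h3 := Multiset.toFinset_card_le p.roots
  have h4 := Polynomial.card_roots' p
  rw [Finset.card_univ, hF] at h2
  rw [hdeg] at h4
  nlinarith

lemma q_eq_two_pow {q : ℕ} (hchar : ringChar F = 2) (hK : Fintype.card K = q)
    (hF : Fintype.card F = q ^ 2) : ∃ e : ℕ, 0 < e ∧ q = 2 ^ e := by
  haveI hc : CharP F 2 := hchar ▸ ringChar.charP F
  obtain ⟨d, hprime, hcard⟩ := FiniteField.card F 2
  have hq2 : 2 ≤ q := by rw [← hK]; exact Fintype.one_lt_card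
  have hdvd : q ∣ 2 ^ (d:ℕ) := by
    rw [← hcard, hF, pow_two]
    exact dvd_mul_right q q
  obtain ⟨e, he, rfl⟩ := (Nat.dvd_prime_pow Nat.prime_two).mp hdvd
  exact ⟨e, by
    constructor
    · by_contra h0
      interval_cases e <;> omega
    · rfl⟩

end FieldSide

section PsiSide

variable {K F : Type*} [Field K] [Fintype K] [Field F] [Fintype F] [Algebra K F]
variable {q n : ℕ}

lemma hq_two (hK : Fintype.card K = q) : 2 ≤ q := by
  rw [← hK]; exact Fintype.one_lt_card

lemma injF : Function.Injective (algebraMap K F) := (algebraMap K F).injective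

lemma frob_add (hchar : ringChar F = 2) (hK : Fintype.card K = q)
    (hF : Fintype.card F = q ^ 2) (x y : F) : (x + y) ^ q = x ^ q + y ^ q := by
  obtain ⟨e, he, rfl⟩ := q_eq_two_pow hchar hK hF
  haveI : CharP F 2 := hchar ▸ ringChar.charP F
  haveI : Fact (Nat.Prime 2) := ⟨Nat.prime_two⟩
  exact add_pow_char_pow x y 2 e

lemma frob_sub (hchar : ringChar F = 2) (hK : Fintype.card K = q)
    (hF : Fintype.card F = q ^ 2) (x y : F) : (x - y) ^ q = x ^ q - y ^ q := by
  obtain ⟨e, he, rfl⟩ := q_eq_two_pow hchar hK hF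
  haveI : CharP F 2 := hchar ▸ ringChar.charP F
  haveI : Fact (Nat.Prime 2) := ⟨Nat.prime_two⟩
  exact sub_pow_char_pow x y e

lemma pow_qq (hF : Fintype.card F = q ^ 2) (x : F) : (x ^ q) ^ q = x := by
  rw [← pow_mul, ← pow_two, ← hF, FiniteField.pow_card]

lemma mapK_pow (hK : Fintype.card K = q) (a : K) : a ^ q = a := by
  rw [← hK, FiniteField.pow_card]

lemma Tr_add {Tr : F → K} (hTr : ∀ x : F, algebraMap K F (Tr x) = x + x ^ q)
    (hchar : ringChar F = 2) (hK : Fintype.card K = q) (hF : Fintype.card F = q ^ 2)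
    (x y : F) : Tr (x + y) = Tr x + Tr y := by
  apply injF (K := K) (F := F)
  rw [map_add, hTr, hTr, hTr, frob_add hchar hK hF]
  ring

lemma Tr_sub {Tr : F → K} (hTr : ∀ x : F, algebraMap K F (Tr x) = x + x ^ q)
    (hchar : ringChar F = 2) (hK : Fintype.card K = q) (hF : Fintype.card F = q ^ 2)
    (x y : F) : Tr (x - y) = Tr x - Tr y := by
  apply injF (K := K) (F := F)
  rw [map_sub, hTr, hTr, hTr, frob_sub hchar hK hF]
  ring

lemma Tr_algsmul {Tr : F → K} (hTr : ∀ x : F, algebraMap K F (Tr x) = x + x ^ q)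
    (hK : Fintype.card K = q) (a : K) (x : F) :
    Tr (algebraMap K F a * x) = a * Tr x := by
  apply injF (K := K) (F := F)
  rw [map_mul, hTr, hTr, mul_pow, ← map_pow, mapK_pow hK]
  ring

lemma Tr_conj1 {Tr : F → K} (hTr : ∀ x : F, algebraMap K F (Tr x) = x + x ^ q)
    (hF : Fintype.card F = q ^ 2) (β a : F) :
    Tr (β * a ^ q) = Tr (β ^ q * a) := by
  apply injF (K := K) (F := F)
  rw [hTr, hTr, mul_pow, mul_pow, pow_qq hF a, pow_qq hF β]
  ring

lemma Tr_conj2 {Tr : F → K} (hTr : ∀ x : F, algebraMap K F (Tr x) = x + x ^ q)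
    (hF : Fintype.card F = q ^ 2) (β a : F) :
    Tr (β ^ q * a ^ q) = Tr (β * a) := by
  apply injF (K := K) (F := F)
  rw [hTr, hTr, mul_pow, pow_qq hF a, pow_qq hF β]
  ring

lemma beta_ne_zero (hchar : ringChar F = 2) (hK : Fintype.card K = q)
    (hF : Fintype.card F = q ^ 2) {β : F} (hβ : ∀ x : F, x ≠ 0 → ∃ j : ℕ, x = β ^ j) :
    β ≠ 0 := by
  haveI := Classical.decEq F
  intro h0
  apply not_forall_pow_q q (hq_two hK) hF
  intro x
  rcases eq_or_ne x 0 with rfl | hx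
  · exact zero_pow (by have := hq_two hK; omega)
  · obtain ⟨j, rfl⟩ := hβ x hx
    rcases Nat.eq_zero_or_pos j with rfl | hj
    · simp
    · exfalso
      rw [h0, zero_pow (by omega : j ≠ 0)] at hx
      exact hx rfl

lemma beta_conj_ne (hchar : ringChar F = 2) (hK : Fintype.card K = q)
    (hF : Fintype.card F = q ^ 2) {β : F} (hβ : ∀ x : F, x ≠ 0 → ∃ j : ℕ, x = β ^ j)
    (heq : β ^ q = β) : False := by
  haveI := Classical.decEq F
  apply not_forall_pow_q q (hq_two hK) hF
  intro x
  rcases eq_or_ne x 0 with rfl | hx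
  · exact zero_pow (by have := hq_two hK; omega)
  · obtain ⟨j, rfl⟩ := hβ x hx
    rw [← pow_mul, mul_comm, pow_mul, heq]

lemma exists_tr_ne {Tr : F → K} (hTr : ∀ x : F, algebraMap K F (Tr x) = x + x ^ q)
    (hchar : ringChar F = 2) (hK : Fintype.card K = q) (hF : Fintype.card F = q ^ 2) :
    ∃ y : F, Tr y ≠ 0 := by
  haveI := Classical.decEq F
  haveI : CharP F 2 := hchar ▸ ringChar.charP F
  by_contra hall
  push_neg at hall
  apply not_forall_pow_q q (hq_two hK) hF
  intro x
  have h0 := hTr x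
  rw [hall x, map_zero] at h0
  have hxq : x ^ q = -x := eq_neg_of_add_eq_zero_right h0.symm
  rw [hxq, CharTwo.neg_eq]

lemma finrank_two (hK : Fintype.card K = q) (hF : Fintype.card F = q ^ 2) :
    Module.finrank K F = 2 := by
  have h1 := Module.card_eq_pow_finrank (K := K) (V := F)
  rw [hK, hF] at h1
  exact (Nat.pow_right_injective (hq_two hK) h1.symm)

end PsiSide

section Psi2

variable {K F : Type*} [Field K] [Fintype K] [Field F] [Fintype F] [Algebra K F]
variable {q n : ℕ}

lemma span_pair_top (hchar : ringChar F = 2) (hK : Fintype.card K = q)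
    (hF : Fintype.card F = q ^ 2) {β : F}
    (hβ : ∀ x : F, x ≠ 0 → ∃ j : ℕ, x = β ^ j) :
    Submodule.span K {β, β ^ q} = ⊤ := by
  haveI : CharP F 2 := hchar ▸ ringChar.charP F
  have hb0 : β ≠ 0 := beta_ne_zero hchar hK hF hβ
  have hind : LinearIndependent K ![β, β ^ q] := by
    rw [LinearIndependent.pair_iff]
    intro s t hst
    by_cases ht : t = 0
    · subst ht
      rw [zero_smul, add_zero] at hst
      exact ⟨(smul_eq_zero.mp hst).resolve_right hb0, rfl⟩
    · exfalso
      have h1 : t • (β ^ q) = -(s • β) := by linear_combination hst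
      have hBq : β ^ q = algebraMap K F (-(t⁻¹ * s)) * β := by
        rw [← Algebra.smul_def]
        calc β ^ q = (t⁻¹ * t) • β ^ q := by rw [inv_mul_cancel₀ ht, one_smul]
          _ = t⁻¹ • (t • β ^ q) := by rw [mul_smul]
          _ = t⁻¹ • (-(s • β)) := by rw [h1]
          _ = (-(t⁻¹ * s)) • β := by rw [smul_neg, smul_smul, neg_smul]
      set c : F := algebraMap K F (-(t⁻¹ * s)) with hc
      have hcq : c ^ q = c := by rw [hc, ← map_pow, mapK_pow hK]
      have hb : β = c ^ 2 * β := by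
        conv_lhs => rw [← pow_qq hF β, hBq, mul_pow, hcq, hBq]
        ring
      have hc2 : c ^ 2 = 1 := by
        have h2 : (c ^ 2 - 1) * β = 0 := by rw [sub_mul, one_mul, ← hb, sub_self]
        exact sub_eq_zero.mp ((mul_eq_zero.mp h2).resolve_right hb0)
      have h2F : (2 : F) = 0 := by
        have := CharP.cast_eq_zero F 2
        simpa using this
      have hcsq : (c - 1) ^ 2 = 0 := by linear_combination hc2 + (1 - c) * h2F
      have hc1 : c = 1 := sub_eq_zero.mp (sq_eq_zero_iff.mp hcsq)
      rw [hc1, one_mul] at hBq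
      exact beta_conj_ne hchar hK hF hβ hBq
  have hcard : Fintype.card (Fin 2) = Module.finrank K F := by
    simp [finrank_two hK hF]
  have htop := hind.span_eq_top_of_card_eq_finrank hcard
  have hrange : Set.range ![β, β ^ q] = ({β, β ^ q} : Set F) := by
    ext x
    constructor
    · rintro ⟨i, rfl⟩
      fin_cases i <;> simp
    · rintro (rfl | rfl)
      · exact ⟨0, rfl⟩
      · exact ⟨1, rfl⟩
  rwa [hrange] at htop

lemma trace_pair_zero {Tr : F → K} (hTr : ∀ x : F, algebraMap K F (Tr x) = x + x ^ q)
    (hchar : ringChar F = 2) (hK : Fintype.card K = q) (hF : Fintype.card F = q ^ 2)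
    {β : F} (hβ : ∀ x : F, x ≠ 0 → ∃ j : ℕ, x = β ^ j)
    (a : F) (h1 : Tr (β * a) = 0) (h2 : Tr (β ^ q * a) = 0) : a = 0 := by
  by_contra ha
  obtain ⟨y, hy⟩ := exists_tr_ne hTr hchar hK hF
  have hmem : y * a⁻¹ ∈ Submodule.span K ({β, β ^ q} : Set F) := by
    rw [span_pair_top hchar hK hF hβ]
    trivial
  obtain ⟨s, t, hst⟩ := Submodule.mem_span_pair.mp hmem
  have hy2 : y = s • (β * a) + t • (β ^ q * a) := by
    calc y = (y * a⁻¹) * a := by field_simp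
      _ = (s • β + t • β ^ q) * a := by rw [hst]
      _ = s • (β * a) + t • (β ^ q * a) := by
          rw [add_mul, smul_mul_assoc, smul_mul_assoc]
  apply hy
  rw [hy2, Tr_add hTr hchar hK hF, Algebra.smul_def, Tr_algsmul hTr hK,
    Algebra.smul_def, Tr_algsmul hTr hK, h1, h2, mul_zero, mul_zero, add_zero]

lemma Psi_lo (Tr : F → K) (β : F) (α : Fin n → F) (i : Fin n) :
    Psi q n Tr β α ⟨(i : ℕ), by have := i.isLt; omega⟩ = Tr (β * α i) := by
  have hi : (i : ℕ) < n := i.isLt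
  simp [Psi, hi]

lemma Psi_hi (Tr : F → K) (β : F) (α : Fin n → F) (i : Fin n) :
    Psi q n Tr β α ⟨n + (i : ℕ), by have := i.isLt; omega⟩ = Tr (β ^ q * α i) := by
  have hi : ¬ (n + (i : ℕ) < n) := by omega
  simp [Psi, hi]

lemma Psi_inj {Tr : F → K} (hTr : ∀ x : F, algebraMap K F (Tr x) = x + x ^ q)
    (hchar : ringChar F = 2) (hK : Fintype.card K = q) (hF : Fintype.card F = q ^ 2)
    {β : F} (hβ : ∀ x : F, x ≠ 0 → ∃ j : ℕ, x = β ^ j) :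
    Function.Injective (Psi q n Tr β) := by
  intro a b hab
  funext i
  have h1 : Tr (β * a i) = Tr (β * b i) := by
    have := congrFun hab ⟨(i : ℕ), by have := i.isLt; omega⟩
    rwa [Psi_lo, Psi_lo] at this
  have h2 : Tr (β ^ q * a i) = Tr (β ^ q * b i) := by
    have := congrFun hab ⟨n + (i : ℕ), by have := i.isLt; omega⟩
    rwa [Psi_hi, Psi_hi] at this
  have hz1 : Tr (β * (a i - b i)) = 0 := by
    rw [mul_sub, Tr_sub hTr hchar hK hF, h1, sub_self]
  have hz2 : Tr (β ^ q * (a i - b i)) = 0 := by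
    rw [mul_sub, Tr_sub hTr hchar hK hF, h2, sub_self]
  have := trace_pair_zero hTr hchar hK hF hβ _ hz1 hz2
  exact sub_eq_zero.mp this

lemma Psi_bij {Tr : F → K} (hTr : ∀ x : F, algebraMap K F (Tr x) = x + x ^ q)
    (hchar : ringChar F = 2) (hK : Fintype.card K = q) (hF : Fintype.card F = q ^ 2)
    {β : F} (hβ : ∀ x : F, x ≠ 0 → ∃ j : ℕ, x = β ^ j) :
    Function.Bijective (Psi q n Tr β) := by
  rw [Fintype.bijective_iff_injective_and_card]
  refine ⟨Psi_inj hTr hchar hK hF hβ, ?_⟩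
  rw [Fintype.card_fun, Fintype.card_fun, Fintype.card_fin, Fintype.card_fin, hF, hK,
    ← pow_mul]

lemma Psi_add {Tr : F → K} (hTr : ∀ x : F, algebraMap K F (Tr x) = x + x ^ q)
    (hchar : ringChar F = 2) (hK : Fintype.card K = q) (hF : Fintype.card F = q ^ 2)
    (β : F) (a b : Fin n → F) :
    Psi q n Tr β (a + b) = Psi q n Tr β a + Psi q n Tr β b := by
  funext i
  by_cases hi : (i : ℕ) < n <;>
    simp [Psi, hi, mul_add, Tr_add hTr hchar hK hF]

lemma Psi_smul {Tr : F → K} (hTr : ∀ x : F, algebraMap K F (Tr x) = x + x ^ q)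
    (hK : Fintype.card K = q) (β : F) (c : K) (a : Fin n → F) :
    Psi q n Tr β (c • a) = c • Psi q n Tr β a := by
  funext i
  by_cases hi : (i : ℕ) < n
  · simp only [Psi, dif_pos hi, Pi.smul_apply, smul_eq_mul]
    rw [Algebra.smul_def, mul_left_comm, Tr_algsmul hTr hK]
  · simp only [Psi, dif_neg hi, Pi.smul_apply, smul_eq_mul]
    rw [Algebra.smul_def, mul_left_comm, Tr_algsmul hTr hK]

end Psi2

section ShiftSide

variable {K F : Type*} [Field K] [Fintype K] [Field F] [Fintype F] [Algebra K F]
variable {q n : ℕ}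

def shiftC {K : Type*} [Field K] (N : ℕ) (v : Fin N → K) : Fin N → K :=
  fun i => if (i : ℕ) = 0 then v ⟨N - 1, by have := i.isLt; omega⟩
           else v ⟨(i : ℕ) - 1, by have := i.isLt; omega⟩

lemma tau_add (v w : Fin (2 * n) → K) : tau n (v + w) = tau n v + tau n w := by
  funext i
  by_cases hi : (i : ℕ) < n <;> simp [tau, hi, neg_add, add_comm]

lemma tau_smul (c : K) (v : Fin (2 * n) → K) : tau n (c • v) = c • tau n v := by
  funext i
  by_cases hi : (i : ℕ) < n <;> simp [tau, hi, mul_neg]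

lemma tau_tau (h2 : ∀ a : K, -a = a) (v : Fin (2 * n) → K) : tau n (tau n v) = v := by
  funext i
  by_cases hi : (i : ℕ) < n
  · have h3 : ¬ (n + (i : ℕ) < n) := by omega
    simp only [tau, dif_pos hi, dif_neg h3]
    rw [h2]
    simp only [Nat.add_sub_cancel_left, Fin.eta]
  · have h3 : (i : ℕ) - n < n := by have := i.isLt; omega
    simp only [tau, dif_neg hi, dif_pos h3]
    rw [h2]
    have he : n + ((i : ℕ) - n) = (i : ℕ) := by have := i.isLt; omega
    simp only [he, Fin.eta]

lemma Psi_T (hn : 0 < n) {Tr : F → K}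
    (hTr : ∀ x : F, algebraMap K F (Tr x) = x + x ^ q)
    (hF : Fintype.card F = q ^ 2) (β : F) (c : Fin n → F) :
    Psi q n Tr β (Tshift q n c) = shiftC (2 * n) (Psi q n Tr β c) := by
  funext i
  by_cases h0 : (i : ℕ) = 0
  · have hin : (i : ℕ) < n := by omega
    have h2n : ¬ (2 * n - 1 < n) := by omega
    simp only [Psi, Tshift, shiftC, dif_pos hin, dif_pos h0, if_pos h0, dif_neg h2n]
    have he : 2 * n - 1 - n = n - 1 := by omega
    simp only [he]
    exact Tr_conj1 hTr hF β _
  · by_cases hin : (i : ℕ) < n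
    · have h1 : (i : ℕ) - 1 < n := by omega
      simp only [Psi, Tshift, shiftC, dif_pos hin, dif_neg h0, if_neg h0, dif_pos h1]
    · by_cases hieq : (i : ℕ) = n
      · have h1 : (i : ℕ) - n = 0 := by omega
        have h2 : (i : ℕ) - 1 < n := by omega
        simp only [Psi, Tshift, shiftC, dif_neg hin, if_neg h0, dif_pos h2]
        simp only [h1, dif_pos rfl]
        have he : (i : ℕ) - 1 = n - 1 := by omega
        simp only [he]
        exact Tr_conj2 hTr hF β _
      · have h1 : ¬ ((i : ℕ) - n = 0) := by omega
        have h2 : ¬ ((i : ℕ) - 1 < n) := by omega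
        simp only [Psi, Tshift, shiftC, dif_neg hin, if_neg h0, dif_neg h2, dif_neg h1]
        have he : (i : ℕ) - n - 1 = (i : ℕ) - 1 - n := by omega
        simp only [he]

lemma tau_shiftC (h2 : ∀ a : K, -a = a) (hn : 0 < n) (v : Fin (2 * n) → K) :
    tau n (shiftC (2 * n) v) = shiftC (2 * n) (tau n v) := by
  funext i
  by_cases h0 : (i : ℕ) = 0
  · have hin : (i : ℕ) < n := by omega
    have hn0 : ¬ ((n + (i : ℕ) : ℕ) = 0) := by omega
    have h2n : ¬ (2 * n - 1 < n) := by omega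
    simp only [tau, shiftC, dif_pos hin, if_neg hn0, if_pos h0, dif_neg h2n]
    rw [h2]
    exact congrArg v (Fin.ext (by simp only [Fin.val_mk]; omega))
  · by_cases hin : (i : ℕ) < n
    · have hn0 : ¬ ((n + (i : ℕ) : ℕ) = 0) := by omega
      have hlt : ¬ ((i : ℕ) - 1 < n) → False := by intro h; omega
      have h1 : (i : ℕ) - 1 < n := by omega
      simp only [tau, shiftC, dif_pos hin, if_neg hn0, if_neg h0, dif_pos h1]
      exact congrArg (fun z => -v z) (Fin.ext (show n + (i : ℕ) - 1 = n + ((i : ℕ) - 1) from by omega))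
    · by_cases hieq : (i : ℕ) = n
      · have h1 : (i : ℕ) - n = 0 := by omega
        have h2' : (i : ℕ) - 1 < n := by omega
        simp only [tau, shiftC, dif_neg hin, if_neg h0, dif_pos h2', h1,
          eq_self_iff_true, if_true]
        rw [h2]
        exact congrArg v (Fin.ext (show (2 * n - 1 : ℕ) = n + ((i : ℕ) - 1) from by omega))
      · have h1 : ¬ ((i : ℕ) - n = 0) := by omega
        have h2' : ¬ ((i : ℕ) - 1 < n) := by omega
        simp only [tau, shiftC, dif_neg hin, if_neg h0, dif_neg h2', if_neg h1]
        exact congrArg v (Fin.ext (show (i : ℕ) - n - 1 = (i : ℕ) - 1 - n from by omega))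

lemma shiftC_coeffVec {K : Type*} [Field K] (N : ℕ) (hN : 2 ≤ N) (p : K[X])
    (hp : p.natDegree ≤ N - 2) :
    shiftC N (coeffVec N p) = coeffVec N (X * p) := by
  funext i
  by_cases h0 : (i : ℕ) = 0
  · simp only [shiftC, coeffVec, if_pos h0]
    rw [Polynomial.coeff_eq_zero_of_natDegree_lt (by omega : p.natDegree < N - 1)]
    rw [h0, Polynomial.mul_coeff_zero, Polynomial.coeff_X_zero, zero_mul]
  · simp only [shiftC, coeffVec, if_neg h0]
    have hc : (X * p).coeff (((i : ℕ) - 1) + 1) = p.coeff ((i : ℕ) - 1) :=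
      Polynomial.coeff_X_mul p _
    rw [show ((i : ℕ) - 1) + 1 = (i : ℕ) from by omega] at hc
    rw [← hc]

lemma sum_split {α : Type*} [AddCommMonoid α] (n : ℕ) (G : Fin (2 * n) → α) :
    ∑ j : Fin (2 * n), G j
      = ∑ i : Fin n, (G ⟨(i : ℕ), by have := i.isLt; omega⟩
          + G ⟨n + (i : ℕ), by have := i.isLt; omega⟩) := by
  classical
  set g : ℕ → α := fun j => if h : j < 2 * n then G ⟨j, h⟩ else 0 with hg
  have h1 : ∑ j : Fin (2 * n), G j = ∑ j ∈ Finset.range (2 * n), g j := by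
    rw [← Fin.sum_univ_eq_sum_range]
    refine Finset.sum_congr rfl fun j _ => ?_
    simp [hg, j.isLt]
  have h2 : ∑ j ∈ Finset.range (2 * n), g j
      = ∑ j ∈ Finset.range n, g j + ∑ j ∈ Finset.range n, g (n + j) := by
    rw [Finset.range_eq_Ico, ← Finset.sum_Ico_consecutive _ (Nat.zero_le n)
      (by omega : n ≤ 2 * n)]
    congr 1
    · rw [Finset.range_eq_Ico]
    rw [Finset.sum_Ico_eq_sum_range]
    simp only [show 2 * n - n = n from by omega]
  rw [h1, h2, ← Finset.sum_add_distrib,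
    ← Fin.sum_univ_eq_sum_range (fun j => g j + g (n + j)) n]
  refine Finset.sum_congr rfl fun i _ => ?_
  have hi1 : (i : ℕ) < 2 * n := by have := i.isLt; omega
  have hi2 : n + (i : ℕ) < 2 * n := by have := i.isLt; omega
  simp [hg, hi1, hi2]

lemma key_id {Tr : F → K} (hTr : ∀ x : F, algebraMap K F (Tr x) = x + x ^ q)
    (hF : Fintype.card F = q ^ 2) (β U V : F) :
    algebraMap K F (Tr (β * U) * (- Tr (β ^ q * V)) + Tr (β ^ q * U) * Tr (β * V))
      = ((β ^ q) ^ 2 - β ^ 2) * (U * V ^ q - U ^ q * V) := by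
  rw [map_add, map_mul, map_neg, map_mul, hTr, hTr, hTr, hTr,
    mul_pow, mul_pow, mul_pow, mul_pow, pow_qq hF]
  ring

lemma altInner_eq (hn : 0 < n) {Tr : F → K}
    (hTr : ∀ x : F, algebraMap K F (Tr x) = x + x ^ q)
    (hF : Fintype.card F = q ^ 2) (β : F) (u v : Fin n → F) :
    algebraMap K F (∑ j : Fin (2 * n), Psi q n Tr β u j * tau n (Psi q n Tr β v) j)
      = altInner q n β u v := by
  rw [sum_split n (fun j => Psi q n Tr β u j * tau n (Psi q n Tr β v) j), map_sum]
  unfold altInner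
  rw [Finset.mul_sum]
  refine Finset.sum_congr rfl fun i _ => ?_
  have e1 : Psi q n Tr β u ⟨(i : ℕ), by have := i.isLt; omega⟩ = Tr (β * u i) :=
    Psi_lo Tr β u i
  have e3 : Psi q n Tr β u ⟨n + (i : ℕ), by have := i.isLt; omega⟩ = Tr (β ^ q * u i) :=
    Psi_hi Tr β u i
  have e2 : tau n (Psi q n Tr β v) ⟨(i : ℕ), by have := i.isLt; omega⟩
      = - Tr (β ^ q * v i) := by
    simp only [tau, dif_pos i.isLt]
    rw [show (⟨n + (i : ℕ), by have := i.isLt; omega⟩ : Fin (2 * n))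
      = ⟨n + (i : ℕ), by have := i.isLt; omega⟩ from rfl, Psi_hi Tr β v i]
  have e4 : tau n (Psi q n Tr β v) ⟨n + (i : ℕ), by have := i.isLt; omega⟩
      = Tr (β * v i) := by
    have h3 : ¬ (n + (i : ℕ) < n) := by omega
    simp only [tau, dif_neg h3, Nat.add_sub_cancel_left]
    exact Psi_lo Tr β v i
  rw [e1, e2, e3, e4]
  exact key_id hTr hF β (u i) (v i)

end ShiftSide

end Stmt16

open Stmt16 in
/-- Assume `char F = 2`.  Let `g` be a monic divisor of `x^{2n} − 1` in
`K[x]` of degree `k` with `0 ≤ k ≤ 2n − 1`, `D ⊆ K^{2n}` the cyclic code corresponding to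
`⟨g⟩`, `h = (x^{2n} − 1)/g` with reciprocal polynomial `h* = x^{2n−k}h(1/x)` (`h.reverse`)
and coefficient vector `V_{h*} ∈ K^{2n}`, and `C = Ψ⁻¹(D) ⊆ F^n`.  Then the alternating
dual `C^{⊥_a}` equals the `K`-linear span of the `k` vectors `T^i(Ψ⁻¹(τ(V_{h*})))`,
`0 ≤ i ≤ k − 1`. -/
theorem stmt16 (q n k : ℕ) (hn : 0 < n) {K F : Type*} [Field K] [Fintype K] [Field F]
    [Fintype F] [Algebra K F] (hchar : ringChar F = 2)
    (hK : Fintype.card K = q) (hF : Fintype.card F = q ^ 2)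
    (β : F) (hβ : ∀ x : F, x ≠ 0 → ∃ j : ℕ, x = β ^ j)
    (Tr : F → K) (hTr : ∀ x : F, algebraMap K F (Tr x) = x + x ^ q)
    (g : K[X]) (hg : g.Monic) (hdvd : g ∣ X ^ (2 * n) - 1)
    (hdeg : g.natDegree = k) (hk : k ≤ 2 * n - 1) :
    {v : Fin n → F | ∀ u ∈ Psi q n Tr β ⁻¹' cyclicCodeOf (2 * n) g,
        altInner q n β u v = 0} =
      (Submodule.span K (Set.range fun i : Fin k =>
          (Tshift q n)^[(i : ℕ)]
            (Function.invFun (Psi q n Tr β)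
              (tau n (coeffVec (2 * n) (((X : K[X]) ^ (2 * n) - 1) / g).reverse)))) :
        Set (Fin n → F)) := by
  classical
  have hN : 0 < 2 * n := by omega
  haveI : CharP F 2 := hchar ▸ ringChar.charP F
  haveI : CharP K 2 := (algebraMap K F).charP (injF (K := K) (F := F)) 2
  have h2K : ∀ a : K, -a = a := fun a => CharTwo.neg_eq a
  have hbij : Function.Bijective (Psi q n Tr β) := Psi_bij hTr hchar hK hF hβ
  set hpoly : K[X] := ((X : K[X]) ^ (2 * n) - 1) / g with hhpoly
  set sfun : Fin k → (Fin (2 * n) → K) :=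
    (fun i : Fin k => coeffVec (2 * n) ((X : K[X]) ^ (i : ℕ) * hpoly.reverse)) with hsfun
  set w0 : Fin n → F :=
    Function.invFun (Psi q n Tr β) (tau n (coeffVec (2 * n) hpoly.reverse)) with hw0
  set rfun : Fin k → (Fin n → F) := (fun i : Fin k => (Tshift q n)^[(i : ℕ)] w0) with hrfun
  have hrevdeg : hpoly.reverse.natDegree ≤ 2 * n - k := by
    have h1 : hpoly.reverse.natDegree ≤ hpoly.natDegree := hpoly.reverse_natDegree_le
    rw [hhpoly, h_natDegree (2 * n) hN hg hdvd, hdeg] at h1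
    exact h1
  have hrs : ∀ j : ℕ, j < k →
      Psi q n Tr β ((Tshift q n)^[j] w0)
        = tau n (coeffVec (2 * n) ((X : K[X]) ^ j * hpoly.reverse)) := by
    intro j
    induction j with
    | zero =>
      intro _
      rw [Function.iterate_zero_apply, hw0, Function.invFun_eq (hbij.surjective _),
        pow_zero, one_mul]
    | succ j ih =>
      intro hj1
      have hdegj : ((X : K[X]) ^ j * hpoly.reverse).natDegree ≤ 2 * n - 2 := by
        have h1 := Polynomial.natDegree_mul_le (p := (X : K[X]) ^ j)
          (q := hpoly.reverse)
        rw [Polynomial.natDegree_X_pow] at h1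
        omega
      rw [Function.iterate_succ_apply', Psi_T hn hTr hF β, ih (by omega),
        ← tau_shiftC h2K hn, shiftC_coeffVec (2 * n) (by omega) _ hdegj]
      exact congrArg (tau n) (congrArg (coeffVec (2 * n)) (by ring))
  have hes : ∀ i : Fin k, tau n (Psi q n Tr β (rfun i)) = sfun i := by
    intro i
    rw [hrfun]
    show tau n (Psi q n Tr β ((Tshift q n)^[(i : ℕ)] w0)) = sfun i
    rw [hrs (i : ℕ) i.isLt, tau_tau h2K]
  let Λ : (Fin n → F) →ₗ[K] (Fin (2 * n) → K) :=
    { toFun := fun x => tau n (Psi q n Tr β x)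
      map_add' := fun a b => by
        show tau n (Psi q n Tr β (a + b)) = tau n (Psi q n Tr β a) + tau n (Psi q n Tr β b)
        rw [Psi_add hTr hchar hK hF, tau_add]
      map_smul' := fun c a => by
        show tau n (Psi q n Tr β (c • a)) = c • tau n (Psi q n Tr β a)
        rw [Psi_smul hTr hK, tau_smul] }
  have hΛbij : Function.Bijective Λ := by
    have ht : Function.Bijective (tau n : (Fin (2 * n) → K) → (Fin (2 * n) → K)) :=
      Function.Involutive.bijective (tau_tau h2K)
    show Function.Bijective (fun x => tau n (Psi q n Tr β x))
    exact Function.Bijective.comp ht hbij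
  let e : (Fin n → F) ≃ₗ[K] (Fin (2 * n) → K) := LinearEquiv.ofBijective Λ hΛbij
  have he : ∀ x, e x = tau n (Psi q n Tr β x) := fun _ => rfl
  have hmap : Submodule.map (e : (Fin n → F) →ₗ[K] (Fin (2 * n) → K))
      (Submodule.span K (Set.range rfun)) = Submodule.span K (Set.range sfun) := by
    rw [Submodule.map_span]
    congr 1
    rw [← Set.range_comp]
    refine congrArg Set.range (funext fun i => ?_)
    show e (rfun i) = sfun i
    rw [he]
    exact hes i
  ext v
  simp only [Set.mem_setOf_eq, SetLike.mem_coe]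
  have main : (∀ u ∈ Psi q n Tr β ⁻¹' cyclicCodeOf (2 * n) g,
      altInner q n β u v = 0)
      ↔ (∀ d ∈ cyclicCodeOf (2 * n) g,
          ∑ j : Fin (2 * n), d j * tau n (Psi q n Tr β v) j = 0) := by
    constructor
    · intro H d hd
      obtain ⟨u, rfl⟩ := hbij.surjective d
      have h0 := H u (Set.mem_preimage.mpr hd)
      apply injF (K := K) (F := F)
      rw [map_zero, altInner_eq hn hTr hF β u v, h0]
    · intro H u hu
      have hd := H (Psi q n Tr β u) hu
      rw [← altInner_eq hn hTr hF β u v, hd, map_zero]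
  rw [main, dual_eq_span (2 * n) k hN hg hdvd hdeg hk (tau n (Psi q n Tr β v))]
  constructor
  · intro hv
    have h1 : e v ∈ Submodule.span K (Set.range sfun) := hv
    rw [← hmap, Submodule.mem_map] at h1
    obtain ⟨x, hx, hex⟩ := h1
    have hxv : x = v := by
      apply hΛbij.injective
      exact hex
    rw [← hxv]
    exact hx
  · intro hv
    have hv' : v ∈ Submodule.span K (Set.range rfun) := hv
    have h1 := Submodule.mem_map_of_mem (f := (e : (Fin n → F) →ₗ[K] (Fin (2 * n) → K))) hv'
    rw [hmap] at h1
    exact h1
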